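/- Let κ be regular uncountable and λ ≥ κ. Suppose TP(κ, λ) holds (every thin (κ,λ)-list has a cofinal branch). Then for every (κ, λ)-list D = ⟨d_x : x ∈ P_κ(λ)⟩ for which there exists a cofinal set Y ⊆ P_κ(λ) with |{d_x ∩ y : y ⊆ x ∈ P_κ(λ)}| < κ for every y ∈ Y, D has a cofinal branch. In particular, TP⁻(κ, λ) is equivalent to TP(κ, λ). -/

import Mathlib

open Cardinal

universe u

/-- `C` is a club in `P_κ(X)`. -/
def IsPkClub {X : Type u} (κ : Cardinal.{u}) (C : Set (Set X)) : Prop :=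
  (∀ y ∈ C, #y < κ) ∧
    (∀ D : Set (Set X), D ⊆ C → D.Nonempty → #D < κ → IsChain (· ⊆ ·) D → ⋃₀ D ∈ C) ∧
    (∀ x : Set X, #x < κ → ∃ y ∈ C, x ⊆ y)

/-- The set of traces of a `(κ, X)`-list `d` on `y`:  `{d_x ∩ y : y ⊆ x ∈ P_κ(X)}`. -/
def Traces {X : Type u} (κ : Cardinal.{u}) (d : Set X → Set X) (y : Set X) : Set (Set X) :=
  {s : Set X | ∃ x : Set X, #x < κ ∧ y ⊆ x ∧ s = d x ∩ y}

/-- `b` is a cofinal branch of the `(κ, X)`-list `d`. -/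
def IsCofBranch {X : Type u} (κ : Cardinal.{u}) (d : Set X → Set X) (b : Set X) : Prop :=
  ∀ x : Set X, #x < κ → ∃ z : Set X, #z < κ ∧ x ⊆ z ∧ b ∩ x = d z ∩ x

/-- Answering a question of Fontanella and Matet: if `TP(κ, λ)` holds (every thin
`(κ, λ)`-list has a cofinal branch, thinness being witnessed by a club), then every
`(κ, λ)`-list whose thinness is witnessed merely by a cofinal set `Y ⊆ P_κ(λ)` has a
cofinal branch.  In particular `TP⁻(κ, λ)` is equivalent to `TP(κ, λ)`.  Here `λ = |X|`. -/
theorem stmt11 {X : Type u} (κ : Cardinal.{u}) (hreg : κ.IsRegular)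
    (hunc : Cardinal.aleph0 < κ) (hX : κ ≤ #X)
    (hTP : ∀ d : Set X → Set X, (∀ x : Set X, d x ⊆ x) →
      (∃ C : Set (Set X), IsPkClub κ C ∧ ∀ y ∈ C, #(Traces κ d y) < κ) →
      ∃ b : Set X, IsCofBranch κ d b)
    (d : Set X → Set X) (hd : ∀ x : Set X, d x ⊆ x)
    (Y : Set (Set X)) (hYsmall : ∀ y ∈ Y, #y < κ)
    (hYcof : ∀ x : Set X, #x < κ → ∃ y ∈ Y, x ⊆ y)
    (hthin : ∀ y ∈ Y, #(Traces κ d y) < κ) :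
    ∃ b : Set X, IsCofBranch κ d b := by
  classical
  -- `SS y W` : the traces on `y` realized by elements of `Y` above `W`.
  set SS : Set X → Set X → Set (Set X) :=
    fun y W => {s : Set X | ∃ z : Set X, z ∈ Y ∧ W ⊆ z ∧ s = d z ∩ y} with hSSdef
  -- `F y` : the traces on `y` realized by `Y`-elements above *every* `Y`-cover of `y`.
  set F : Set X → Set (Set X) :=
    fun y => {s : Set X | ∀ W : Set X, W ∈ Y → y ⊆ W → s ∈ SS y W} with hFdef
  -- `SS y W` is small whenever `W ∈ Y` covers `y`.
  have hScard : ∀ (y W : Set X), W ∈ Y → y ⊆ W → #(SS y W) < κ := by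
    intro y W hWY hyW
    have hsub : SS y W ⊆ (fun t => t ∩ y) '' (Traces κ d W) := by
      rintro s ⟨z, hzY, hWz, rfl⟩
      refine ⟨d z ∩ W, ⟨z, hYsmall z hzY, hWz, rfl⟩, ?_⟩
      simp only
      rw [Set.inter_assoc, Set.inter_eq_self_of_subset_right hyW]
    calc #(SS y W) ≤ #((fun t => t ∩ y) '' (Traces κ d W)) :=
          Cardinal.mk_le_mk_of_subset hsub
      _ ≤ #(Traces κ d W) := Cardinal.mk_image_le
      _ < κ := hthin W hWY
  -- `F y` is nonempty for small `y` : the family of `Y`-covers is `κ`-directed and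
  -- the sets `SS y W` form a decreasing directed family of nonempty sets of size `< κ`.
  have hFne : ∀ y : Set X, #y < κ → (F y).Nonempty := by
    intro y hy
    obtain ⟨W₀, hW₀Y, hyW₀⟩ := hYcof y hy
    by_contra hne
    rw [Set.not_nonempty_iff_eq_empty] at hne
    have hfail : ∀ s ∈ SS y W₀, ∃ W : Set X, W ∈ Y ∧ y ⊆ W ∧ s ∉ SS y W := by
      intro s hs
      by_contra hc
      push_neg at hc
      have hsF : s ∈ F y := fun W hWY hyW => hc W hWY hyW
      rw [hne] at hsF
      exact hsF
    choose g hgY hgy hgnot using hfail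
    -- the union of `W₀` with all the "failure witnesses" is small
    have hUcard : #(W₀ ∪ ⋃ (s : ↥(SS y W₀)), g s.1 s.2 : Set X) < κ := by
      refine lt_of_le_of_lt (Cardinal.mk_union_le _ _)
        (Cardinal.add_lt_of_lt hreg.aleph0_le (hYsmall W₀ hW₀Y) ?_)
      refine lt_of_le_of_lt (Cardinal.mk_iUnion_le _) ?_
      refine Cardinal.mul_lt_of_lt hreg.aleph0_le (hScard y W₀ hW₀Y hyW₀) ?_
      exact Cardinal.iSup_lt_of_isRegular hreg (hScard y W₀ hW₀Y hyW₀)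
        (fun s => hYsmall _ (hgY s.1 s.2))
    obtain ⟨Wst, hWstY, hUWst⟩ := hYcof _ hUcard
    have hW₀Wst : W₀ ⊆ Wst := (Set.subset_union_left).trans hUWst
    -- `d Wst ∩ y` belongs to `SS y W₀` …
    have hsstar : (d Wst ∩ y) ∈ SS y W₀ := ⟨Wst, hWstY, hW₀Wst, rfl⟩
    -- … but also to `SS y (g _ _)`, a contradiction.
    have hgWst : g _ hsstar ⊆ Wst := by
      refine Set.Subset.trans ?_ hUWst
      refine Set.Subset.trans ?_ (Set.subset_union_right)
      exact Set.subset_iUnion (fun (s : ↥(SS y W₀)) => g s.1 s.2) ⟨_, hsstar⟩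
    exact hgnot _ hsstar ⟨Wst, hWstY, hgWst, rfl⟩
  -- `F` is coherent: restrictions of members of `F x'` to `x ⊆ x'` are members of `F x`.
  have hFcoh : ∀ (x x' : Set X), #x' < κ → x ⊆ x' →
      ∀ s ∈ F x', s ∩ x ∈ F x := by
    intro x x' hx' hxx' s hs W hWY hxW
    have hsm : #(W ∪ x' : Set X) < κ :=
      lt_of_le_of_lt (Cardinal.mk_union_le _ _)
        (Cardinal.add_lt_of_lt hreg.aleph0_le (hYsmall W hWY) hx')
    obtain ⟨W', hW'Y, hW'⟩ := hYcof (W ∪ x') hsm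
    obtain ⟨z, hzY, hWz, hsz⟩ := hs W' hW'Y ((Set.subset_union_right).trans hW')
    refine ⟨z, hzY, ((Set.subset_union_left).trans hW').trans hWz, ?_⟩
    rw [hsz, Set.inter_assoc, Set.inter_eq_self_of_subset_right hxx']
  -- every member of `F x` is of the form `d z ∩ x` for a small `z ⊇ x`.
  have hFrep : ∀ (x : Set X), #x < κ → ∀ s ∈ F x,
      ∃ z : Set X, #z < κ ∧ x ⊆ z ∧ s = d z ∩ x := by
    intro x hx s hs
    obtain ⟨W₀, hW₀Y, hxW₀⟩ := hYcof x hx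
    obtain ⟨z, hzY, hWz, rfl⟩ := hs W₀ hW₀Y hxW₀
    exact ⟨z, hYsmall z hzY, hxW₀.trans hWz, rfl⟩
  -- the derived list: choose an element of `F x` for each small `x`.
  set L : Set X → Set X := fun x => if h : #x < κ then (hFne x h).choose else ∅ with hLdef
  have hLmem : ∀ (x : Set X) (h : #x < κ), L x ∈ F x := by
    intro x h
    simp only [hLdef, dif_pos h]
    exact (hFne x h).choose_spec
  have hLsub : ∀ x : Set X, L x ⊆ x := by
    intro x
    by_cases h : #x < κ
    · obtain ⟨z, _, _, hz⟩ := hFrep x h _ (hLmem x h)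
      rw [show L x = d z ∩ x from hz]
      exact Set.inter_subset_right
    · simp only [hLdef, dif_neg h]
      exact Set.empty_subset x
  -- the collection of all small sets is a club
  have hclub : IsPkClub κ {y : Set X | #y < κ} := by
    refine ⟨fun y hy => hy, ?_, fun x hx => ⟨x, hx, Set.Subset.rfl⟩⟩
    intro D hD _hne hDcard _hchain
    show #(⋃₀ D) < κ
    refine lt_of_le_of_lt (Cardinal.mk_sUnion_le D) ?_
    refine Cardinal.mul_lt_of_lt hreg.aleph0_le hDcard ?_
    exact Cardinal.iSup_lt_of_isRegular hreg hDcard (fun t => hD t.2)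
  -- `L` is thin, witnessed by this club
  have hthinL : ∀ y ∈ {y : Set X | #y < κ}, #(Traces κ L y) < κ := by
    intro y hy
    have hsub : Traces κ L y ⊆ F y := by
      rintro s ⟨x, hx, hyx, rfl⟩
      exact hFcoh y x hx hyx _ (hLmem x hx)
    obtain ⟨W₀, hW₀Y, hyW₀⟩ := hYcof y hy
    have hsub2 : F y ⊆ SS y W₀ := fun s hs => hs W₀ hW₀Y hyW₀
    exact lt_of_le_of_lt (Cardinal.mk_le_mk_of_subset (hsub.trans hsub2))
      (hScard y W₀ hW₀Y hyW₀)
  -- apply TP to `L`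
  obtain ⟨b, hb⟩ := hTP L hLsub ⟨{y : Set X | #y < κ}, hclub, hthinL⟩
  -- and transfer the branch back to `d`
  refine ⟨b, ?_⟩
  intro x hx
  obtain ⟨z', hz', hxz', heq⟩ := hb x hx
  have hmem : L z' ∩ x ∈ F x := hFcoh x z' hz' hxz' _ (hLmem z' hz')
  obtain ⟨z, hzκ, hxz, hzeq⟩ := hFrep x hx _ hmem
  exact ⟨z, hzκ, hxz, by rw [heq, hzeq]⟩
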